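/- Let a and d be distinct integers with d > a, and consider f(x) = (x + d)²/(x + a). Then the set of integral points (x, y) on the graph of f with y ≥ 1 is exactly the set of pairs (x, y) = (-a + ρ·m², ρ·(m + n)²), where ρ ranges over the positive divisors of d - a, and m, n range over relatively prime positive integers with m·n = (d - a)/ρ. In particular this set is finite. -/

import Mathlib

lemma aux_factor (t k : ℤ) (ht : 0 < t) (hk : 0 < k) (hdvd : t ∣ k^2) :
    ∃ ρ m n : ℤ, 0 < ρ ∧ 0 < m ∧ 0 < n ∧ IsCoprime m n ∧
      ρ * (m * n) = k ∧ t = ρ * m^2 := by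
  have hg0 : 0 < (Int.gcd t k : ℤ) := by
    have : t ≠ 0 := ht.ne'
    exact_mod_cast Int.gcd_pos_of_ne_zero_left k this
  set g : ℤ := (Int.gcd t k : ℤ) with hg
  have hgt : g ∣ t := Int.gcd_dvd_left t k
  have hgk : g ∣ k := Int.gcd_dvd_right t k
  set u : ℤ := t / g with hu
  set v : ℤ := k / g with hv
  have htu : t = g * u := (Int.mul_ediv_cancel' hgt).symm
  have hkv : k = g * v := (Int.mul_ediv_cancel' hgk).symm
  have hu0 : 0 < u := by
    by_contra hc
    push_neg at hc
    nlinarith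
  have hv0 : 0 < v := by
    by_contra hc
    push_neg at hc
    nlinarith
  have hcop : IsCoprime u v := by
    rw [Int.isCoprime_iff_gcd_eq_one]
    exact Int.gcd_div_gcd_div_gcd (by rw [hg] at hg0; exact_mod_cast hg0)
  have hudvd : u ∣ g * v^2 := by
    have h1 : g * u ∣ g * (g * v^2) := by
      rw [← htu]
      calc t ∣ k^2 := hdvd
        _ = g * (g * v^2) := by rw [hkv]; ring
    exact (mul_dvd_mul_iff_left hg0.ne').mp h1
  have hug : u ∣ g := (hcop.pow_right).dvd_of_dvd_mul_right hudvd
  set w : ℤ := g / u with hw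
  have hgw : g = u * w := (Int.mul_ediv_cancel' hug).symm
  have hw0 : 0 < w := by
    by_contra hc
    push_neg at hc
    nlinarith
  exact ⟨w, u, v, hw0, hu0, hv0, hcop, by rw [hkv, hgw]; ring, by rw [htu, hgw]; ring⟩

theorem integral_points_y_pos_of_double_root_case
    (a d : ℤ) (h : a < d) :
    ({q : ℤ × ℤ | q.1 ≠ -a ∧
        (q.2 : ℝ) = ((q.1 : ℝ) + (d : ℝ)) ^ 2 / ((q.1 : ℝ) + (a : ℝ)) ∧ 1 ≤ q.2}
      = {q : ℤ × ℤ | ∃ ρ m n : ℤ, 0 < ρ ∧ ρ ∣ (d - a) ∧ 0 < m ∧ 0 < n ∧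
          IsCoprime m n ∧ m * n = (d - a) / ρ ∧
          q = (-a + ρ * m ^ 2, ρ * (m + n) ^ 2)}) ∧
    Set.Finite {q : ℤ × ℤ | q.1 ≠ -a ∧
        (q.2 : ℝ) = ((q.1 : ℝ) + (d : ℝ)) ^ 2 / ((q.1 : ℝ) + (a : ℝ)) ∧ 1 ≤ q.2} := by
  have hk : 0 < d - a := by linarith
  have hmain : ({q : ℤ × ℤ | q.1 ≠ -a ∧
        (q.2 : ℝ) = ((q.1 : ℝ) + (d : ℝ)) ^ 2 / ((q.1 : ℝ) + (a : ℝ)) ∧ 1 ≤ q.2}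
      = {q : ℤ × ℤ | ∃ ρ m n : ℤ, 0 < ρ ∧ ρ ∣ (d - a) ∧ 0 < m ∧ 0 < n ∧
          IsCoprime m n ∧ m * n = (d - a) / ρ ∧
          q = (-a + ρ * m ^ 2, ρ * (m + n) ^ 2)}) := by
    ext ⟨x, y⟩
    simp only [Set.mem_setOf_eq]
    constructor
    · rintro ⟨hne, heq, hy⟩
      have hxa : ((x : ℝ) + (a : ℝ)) ≠ 0 := by
        intro hc
        apply hne
        have : (x : ℝ) = -(a : ℝ) := by linarith
        exact_mod_cast this
      have heqR : (y : ℝ) * ((x : ℝ) + (a : ℝ)) = ((x : ℝ) + (d : ℝ))^2 := by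
        field_simp at heq
        linarith [heq]
      have hZ : y * (x + a) = (x + d)^2 := by exact_mod_cast heqR
      have ht0 : 0 < x + a := by
        rcases lt_trichotomy (x + a) 0 with hlt | hzero | hgt
        · nlinarith [sq_nonneg (x + d)]
        · exact absurd (by omega : x = -a) hne
        · exact hgt
      have hdvd : (x + a) ∣ (d - a)^2 :=
        ⟨y - (x + a) - 2*(d - a), by linear_combination -hZ⟩
      obtain ⟨ρ, m, n, hρ0, hm0, hn0, hcop, hρmn, htρ⟩ :=
        aux_factor (x + a) (d - a) ht0 hk hdvd
      have hρd : ρ ∣ (d - a) := ⟨m * n, hρmn.symm⟩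
      have hy' : y = ρ * (m + n)^2 := by
        have hcancel : y * (ρ * m^2) = (ρ * (m + n)^2) * (ρ * m^2) := by
          linear_combination hZ - y * htρ + (x + d + ρ*m*(m+n)) * (htρ - hρmn)
        exact mul_right_cancel₀ (by positivity) hcancel
      refine ⟨ρ, m, n, hρ0, hρd, hm0, hn0, hcop, ?_, ?_⟩
      · rw [← hρmn, Int.mul_ediv_cancel_left _ hρ0.ne']
      · have hx : x = -a + ρ * m^2 := by omega
        rw [Prod.mk.injEq]
        exact ⟨hx, hy'⟩
    · rintro ⟨ρ, m, n, hρ0, hρd, hm0, hn0, hcop, hmn, hq⟩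
      have hρmn : ρ * (m * n) = d - a := by
        rw [hmn]; exact Int.mul_ediv_cancel' hρd
      obtain ⟨hx, hy⟩ := Prod.mk.injEq .. ▸ hq
      have hρm2 : (0:ℤ) < ρ * m^2 := by positivity
      refine ⟨by omega, ?_, by nlinarith [sq_nonneg (m + n - 1)]⟩
      have hxa : ((x : ℝ) + (a : ℝ)) ≠ 0 := by
        have : (0:ℤ) ≠ x + a → ((x + a : ℤ) : ℝ) ≠ 0 := by
          intro h1 h2
          exact h1 (by exact_mod_cast h2.symm)
        push_cast at this
        exact this (by omega)
      rw [eq_div_iff hxa]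
      have : y * (x + a) = (x + d)^2 := by
        have hd' : d = a + ρ * (m * n) := by omega
        subst hx hy hd'
        ring
      exact_mod_cast congrArg (Int.cast : ℤ → ℝ) this
  refine ⟨hmain, ?_⟩
  rw [hmain]
  apply Set.Finite.subset (Set.finite_Icc ((-a + 1, 1) : ℤ × ℤ) ((-a + (d-a)^2, 2*(d-a)^2 + 2*(d-a)) : ℤ × ℤ))
  rintro ⟨x, y⟩ ⟨ρ, m, n, hρ0, hρd, hm0, hn0, hcop, hmn, hq⟩
  have hρmn : ρ * (m * n) = d - a := by
    rw [hmn]; exact Int.mul_ediv_cancel' hρd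
  obtain ⟨hx, hy⟩ := Prod.mk.injEq .. ▸ hq
  have h1 : 1 ≤ ρ := hρ0
  have h2 : 1 ≤ m := hm0
  have h3 : 1 ≤ n := hn0
  have hd2 : (d - a)^2 = (ρ * m^2) * (ρ * n^2) := by rw [← hρmn]; ring
  have hb1 : ρ * m^2 ≤ (d - a)^2 := by
    have h4 : 1 ≤ ρ * n^2 := by nlinarith
    nlinarith [mul_le_mul_of_nonneg_left h4 (show (0:ℤ) ≤ ρ * m^2 by positivity)]
  have hb2 : ρ * n^2 ≤ (d - a)^2 := by
    have h4 : 1 ≤ ρ * m^2 := by nlinarith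
    nlinarith [mul_le_mul_of_nonneg_left h4 (show (0:ℤ) ≤ ρ * n^2 by positivity)]
  have hb3 : ρ * (m * n) ≤ d - a := by nlinarith
  constructor
  · constructor <;> simp only [hx] <;> nlinarith
  · constructor <;> simp only [hy] <;> nlinarith
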